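/- In the PRST scheme, the pass-down proportions are nonnegative: Ω_i ≥ 0 for every node i (including the root, where Ω_s = 1). -/
import Mathlib


/-- PRST: the pass-down proportions Ω_i are nonnegative for every node, including the root. -/
theorem prst_Omega_nonneg {V : Type*} [Fintype V] (s : V) (p : V → V) (C : V → Finset V)
    (Ω : V → ℝ) (α : ℝ) (hα0 : 0 < α) (hα1 : α < 1)
    (hroot : p s = s)
    (hreach : ∀ v, ∃ n, p^[n] v = s)
    (hC : ∀ i j, j ∈ C i ↔ j ≠ i ∧ ∃ n, p^[n] j = i)
    (hΩs : Ω s = 1)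
    (hΩ : ∀ i, i ≠ s → Ω i =
      Ω (p i) * ((((C i).card : ℝ) + 1) / ((C (p i)).card : ℝ) -
        1 / (((C (p i)).card : ℝ) - ((C i).card : ℝ))) * (1 - α)) :
    ∀ i, 0 ≤ Ω i := by
  classical
  -- s is fixed by all iterates
  have hfix : ∀ n, p^[n] s = s := fun n => Function.iterate_fixed hroot n
  -- no nontrivial cycles: if i is on a cycle, i = s
  have hcycle : ∀ (i : V) (k m : ℕ), k ≠ 0 → p^[k] i = i → p^[m] i = s → i = s := by
    intro i k m hk hc hm
    rcases Nat.eq_zero_or_pos m with hm0 | hm0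
    · subst hm0; simpa using hm
    have h1 : p^[k * m] i = i := by
      rw [Function.iterate_mul]; exact Function.iterate_fixed hc m
    have hle : m ≤ k * m := Nat.le_mul_of_pos_left m (Nat.pos_of_ne_zero hk)
    have h2 : p^[k * m] i = s := by
      have heq : k * m = (k * m - m) + m := by omega
      rw [heq, Function.iterate_add_apply, hm, hfix]
    rw [h1] at h2; exact h2
  -- a non-root node differs from its parent
  have hnep : ∀ i : V, i ≠ s → i ≠ p i := by
    intro i hi hip
    obtain ⟨n, hn⟩ := hreach i
    have : p^[1] i = i := by simp [← hip]
    exact hi (hcycle i 1 n one_ne_zero this hn)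
  -- i together with its descendants are descendants of p i
  have hsub : ∀ i : V, i ≠ s → insert i (C i) ⊆ C (p i) := by
    intro i hi
    intro j hj
    rcases Finset.mem_insert.mp hj with rfl | hj
    · exact (hC (p j) j).mpr ⟨hnep j hi, 1, by simp⟩
    · obtain ⟨hji, n, hn⟩ := (hC i j).mp hj
      refine (hC (p i) j).mpr ⟨?_, n + 1, ?_⟩
      · rintro rfl
        -- then p^[n+1] i = i, a cycle through i ≠ s
        have hci : p^[n + 1] i = i := by
          rw [Function.iterate_succ_apply, hn]
        obtain ⟨m, hm⟩ := hreach i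
        exact hi (hcycle i (n + 1) m (Nat.succ_ne_zero n) hci hm)
      · rw [Function.iterate_succ_apply', hn]
  have hnotmem : ∀ i : V, i ∉ C i := by
    intro i hmem
    exact ((hC i i).mp hmem).1 rfl
  have hcard : ∀ i : V, i ≠ s → (C i).card + 1 ≤ (C (p i)).card := by
    intro i hi
    have := Finset.card_le_card (hsub i hi)
    rwa [Finset.card_insert_of_notMem (hnotmem i)] at this
  -- the factor is nonnegative
  have hfac : ∀ i : V, i ≠ s →
      0 ≤ (((C i).card : ℝ) + 1) / ((C (p i)).card : ℝ) -
        1 / (((C (p i)).card : ℝ) - ((C i).card : ℝ)) := by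
    intro i hi
    have h := hcard i hi
    set k : ℕ := (C i).card
    set m : ℕ := (C (p i)).card
    have hkm : (k : ℝ) + 1 ≤ (m : ℝ) := by exact_mod_cast h
    have hm0 : (0 : ℝ) < m := by
      have : 1 ≤ m := by omega
      exact_mod_cast Nat.lt_of_lt_of_le Nat.zero_lt_one this
    have hmk : (0 : ℝ) < (m : ℝ) - (k : ℝ) := by linarith
    rw [sub_nonneg, div_le_div_iff₀ hmk hm0]
    nlinarith [Nat.cast_nonneg (α := ℝ) k]
  have key : ∀ n (i : V), p^[n] i = s → 0 ≤ Ω i := by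
    intro n
    induction n with
    | zero => intro i hi; simp only [Function.iterate_zero, id_eq] at hi
              rw [hi, hΩs]; norm_num
    | succ n ih =>
      intro i hi
      by_cases h : i = s
      · rw [h, hΩs]; norm_num
      · rw [hΩ i h]
        have hp : p^[n] (p i) = s := by
          rw [← Function.iterate_succ_apply]; exact hi
        exact mul_nonneg (mul_nonneg (ih (p i) hp) (hfac i h)) (by linarith)
  intro i
  obtain ⟨n, hn⟩ := hreach i
  exact key n i hn
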